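/- Let n ≥ 1, let H be a finite index set, let (q_η)_{η∈H} be nonnegative reals with ∑_η q_η = 1, let P be an n×n orthogonal projection, and for each η ∈ H let M_η be an n×n complex matrix and Π_η an n×n orthogonal projection such that: (i) M_η P = P M_η = P and Π_η P = P Π_η = P; (ii) M_η M_η† ≤ (1−Δ_loc)²·I + (1−(1−Δ_loc)²)·Π_η, where Δ_loc ∈ [0,1] is a fixed constant. Set M_ν := ∑_η q_η M_η and M_H := ∑_η q_η Π_η. Then 1 − ‖M_ν − P‖ ≥ (Δ_loc/2)·(1 − ‖M_H − P‖). -/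

import Mathlib

open Matrix
open scoped ComplexOrder

/-- The operator norm of a square complex matrix (largest singular value). -/
noncomputable def opNorm {n : Type*} [Fintype n] [DecidableEq n] (A : Matrix n n ℂ) : ℝ :=
  ‖Matrix.toEuclideanCLM (𝕜 := ℂ) A‖

section Aux

variable {E : Type*} [NormedAddCommGroup E] [InnerProductSpace ℂ E] [CompleteSpace E]

/-- A self-adjoint idempotent contracts norms. -/
lemma proj_apply_norm_le (T : E →L[ℂ] E) (hsa : star T = T) (hidem : T * T = T) (v : E) :
    ‖T v‖ ≤ ‖v‖ := by
  by_cases h0 : ‖T v‖ = 0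
  · rw [h0]; exact norm_nonneg v
  have hadj : ContinuousLinearMap.adjoint T = T := by
    rw [← ContinuousLinearMap.star_eq_adjoint, hsa]
  have h2 : T (T v) = T v := by rw [← ContinuousLinearMap.mul_apply, hidem]
  have h1 : (inner ℂ (T v) (T v) : ℂ) = inner ℂ v (T v) := by
    conv_rhs => rw [← h2]
    rw [← ContinuousLinearMap.adjoint_inner_left T (T v) v, hadj]
  have h3 : ‖T v‖ ^ 2 ≤ ‖v‖ * ‖T v‖ := by
    rw [← inner_self_eq_norm_sq (𝕜 := ℂ), h1]
    exact re_inner_le_norm v (T v)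
  have h4 : 0 < ‖T v‖ := lt_of_le_of_ne (norm_nonneg _) (Ne.symm h0)
  nlinarith

lemma proj_opNorm_le_one (T : E →L[ℂ] E) (hsa : star T = T) (hidem : T * T = T) :
    ‖T‖ ≤ 1 :=
  ContinuousLinearMap.opNorm_le_bound T zero_le_one fun v => by
    rw [one_mul]; exact proj_apply_norm_le T hsa hidem v

/-- For a self-adjoint idempotent, `re ⟪x, T x⟫ = ‖T x‖²`. -/
lemma proj_re_inner_eq (T : E →L[ℂ] E) (hsa : star T = T) (hidem : T * T = T) (x : E) :
    (inner ℂ x (T x) : ℂ).re = ‖T x‖ ^ 2 := by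
  have hadj : ContinuousLinearMap.adjoint T = T := by
    rw [← ContinuousLinearMap.star_eq_adjoint, hsa]
  have h2 : T (T x) = T x := by rw [← ContinuousLinearMap.mul_apply, hidem]
  have h1 : (inner ℂ x (T x) : ℂ) = inner ℂ (T x) (T x) := by
    conv_lhs => rw [← h2, ← ContinuousLinearMap.adjoint_inner_left T (T x) x, hadj]
  rw [h1, ← RCLike.re_to_complex, inner_self_eq_norm_sq (𝕜 := ℂ)]

end Aux

/-- Positivity transfer from matrix PSD to the Euclidean CLM. -/
lemma psd_re_inner_nonneg {n : ℕ} (B : Matrix (Fin n) (Fin n) ℂ) (hB : B.PosSemidef)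
    (x : EuclideanSpace ℂ (Fin n)) :
    0 ≤ (inner ℂ x (Matrix.toEuclideanCLM (𝕜 := ℂ) B x) : ℂ).re := by
  have h := hB.dotProduct_mulVec_nonneg (WithLp.ofLp x)
  have heq : (inner ℂ x (Matrix.toEuclideanCLM (𝕜 := ℂ) B x) : ℂ)
      = dotProduct (star (WithLp.ofLp x)) (B *ᵥ (WithLp.ofLp x)) := by
    rw [EuclideanSpace.inner_eq_star_dotProduct, Matrix.ofLp_toEuclideanCLM,
      dotProduct_comm]
  rw [heq]
  exact (Complex.nonneg_iff.mp h).1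

set_option maxHeartbeats 1000000 in
set_option synthInstance.maxHeartbeats 400000 in
theorem single_layer_gap_lower_bound
    (n : ℕ) (hn : 1 ≤ n) (H : Type) [Fintype H]
    (q : H → ℝ) (hq : ∀ η, 0 ≤ q η) (hqsum : ∑ η, q η = 1)
    (P : Matrix (Fin n) (Fin n) ℂ) (hP_herm : Pᴴ = P) (hP_idem : P * P = P)
    (M Prj : H → Matrix (Fin n) (Fin n) ℂ)
    (hPrj_herm : ∀ η, (Prj η)ᴴ = Prj η) (hPrj_idem : ∀ η, Prj η * Prj η = Prj η)
    (hMP : ∀ η, M η * P = P) (hPM : ∀ η, P * M η = P)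
    (hPrjP : ∀ η, Prj η * P = P) (hPPrj : ∀ η, P * Prj η = P)
    (Δloc : ℝ) (hΔ0 : 0 ≤ Δloc) (hΔ1 : Δloc ≤ 1)
    (hgram : ∀ η,
      ((((1 - Δloc) ^ 2 : ℝ) : ℂ) • (1 : Matrix (Fin n) (Fin n) ℂ)
        + ((1 - (1 - Δloc) ^ 2 : ℝ) : ℂ) • Prj η
        - M η * (M η)ᴴ).PosSemidef) :
    1 - opNorm ((∑ η, (q η : ℂ) • M η) - P) ≥
      (Δloc / 2) * (1 - opNorm ((∑ η, (q η : ℂ) • Prj η) - P)) := by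
  classical
  set g := Matrix.toEuclideanCLM (𝕜 := ℂ) (n := Fin n) with hg
  set Mν := ∑ η, (q η : ℂ) • M η with hMνdef
  set MH := ∑ η, (q η : ℂ) • Prj η with hMHdef
  set c : ℝ := 1 - (1 - Δloc) ^ 2 with hcdef
  have hc0 : 0 ≤ c := by nlinarith
  have hqC : (∑ η, ((q η : ℝ) : ℂ)) = 1 := by exact_mod_cast hqsum
  -- matrix identities
  have hPMν : P * Mν = P := by
    rw [hMνdef, Finset.mul_sum]
    simp only [Matrix.mul_smul, hPM]
    rw [← Finset.sum_smul, hqC, one_smul]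
  have hMνHP : Mνᴴ * P = P := by
    calc Mνᴴ * P = Mνᴴ * Pᴴ := by rw [hP_herm]
      _ = (P * Mν)ᴴ := (Matrix.conjTranspose_mul P Mν).symm
      _ = Pᴴ := by rw [hPMν]
      _ = P := hP_herm
  have hkey_mat : Mνᴴ * (1 - P) = Mνᴴ - P := by
    rw [mul_sub, mul_one, hMνHP]
  have hMνH : Mνᴴ = ∑ η, (q η : ℂ) • (M η)ᴴ := by
    rw [hMνdef, Matrix.conjTranspose_sum]
    refine Finset.sum_congr rfl fun η _ => ?_
    rw [Matrix.conjTranspose_smul]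
    congr 1
    exact Complex.conj_ofReal (q η)
  have hP1P : P * (1 - P) = 0 := by rw [mul_sub, mul_one, hP_idem, sub_self]
  have h1Pherm : (1 - P)ᴴ = 1 - P := by
    rw [Matrix.conjTranspose_sub, Matrix.conjTranspose_one, hP_herm]
  have h1Pidem : (1 - P) * (1 - P) = 1 - P := by
    rw [mul_sub, mul_one, sub_mul, one_mul, hP_idem, sub_self, sub_zero]
  have hMHsub : MH - P = ∑ η, (q η : ℂ) • (Prj η - P) := by
    rw [hMHdef]
    simp only [smul_sub]
    rw [Finset.sum_sub_distrib, ← Finset.sum_smul, hqC, one_smul]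
  -- projector facts transported to CLMs
  have hg_sa : ∀ X : Matrix (Fin n) (Fin n) ℂ, Xᴴ = X → star (g X) = g X := by
    intro X hX
    rw [← map_star g X, Matrix.star_eq_conjTranspose, hX]
  have hg_mul : ∀ X Y : Matrix (Fin n) (Fin n) ℂ, g X * g Y = g (X * Y) := fun X Y =>
    (map_mul g X Y).symm
  have hgP_proj : ∀ (X : Matrix (Fin n) (Fin n) ℂ), Xᴴ = X → X * X = X →
      ∀ v, ‖g X v‖ ≤ ‖v‖ := by
    intro X hX1 hX2 v
    exact proj_apply_norm_le (g X) (hg_sa X hX1) (by rw [hg_mul, hX2]) v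
  -- basic bounds on b
  set b : ℝ := ‖g (MH - P)‖ with hbdef
  have hb0 : 0 ≤ b := norm_nonneg _
  have hb1 : b ≤ 1 := by
    rw [hbdef, hMHsub, map_sum]
    simp only [_root_.map_smul]
    calc ‖∑ η, (q η : ℂ) • g (Prj η - P)‖ ≤ ∑ η, ‖(q η : ℂ) • g (Prj η - P)‖ :=
          norm_sum_le _ _
      _ ≤ ∑ η, q η := by
          refine Finset.sum_le_sum fun η _ => ?_
          have hns : ‖(q η : ℂ) • g (Prj η - P)‖ = ‖((q η : ℝ) : ℂ)‖ * ‖g (Prj η - P)‖ := by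
            exact norm_smul ((q η : ℝ) : ℂ) (g (Prj η - P))
          rw [hns, Complex.norm_real, Real.norm_eq_abs, abs_of_nonneg (hq η)]
          have hherm : (Prj η - P)ᴴ = Prj η - P := by
            rw [Matrix.conjTranspose_sub, hPrj_herm, hP_herm]
          have hidem : (Prj η - P) * (Prj η - P) = Prj η - P := by
            rw [mul_sub, sub_mul, sub_mul, hPrj_idem, hPrjP, hPPrj, hP_idem]
            abel
          have := proj_opNorm_le_one (g (Prj η - P)) (hg_sa _ hherm)
            (by rw [hg_mul, hidem])
          nlinarith [norm_nonneg (g (Prj η - P)), hq η]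
      _ = 1 := hqsum
  -- the main estimate : a ^ 2 ≤ (1 - Δloc)^2 + c * b
  set a : ℝ := ‖g (Mν - P)‖ with hadef
  have ha0 : 0 ≤ a := norm_nonneg _
  set K : ℝ := (1 - Δloc) ^ 2 + c * b with hKdef
  have hK0 : 0 ≤ K := by positivity
  have hastar : a = ‖g (Mνᴴ - P)‖ := by
    have h1 : Mνᴴ - P = (Mν - P)ᴴ := by rw [Matrix.conjTranspose_sub, hP_herm]
    have hadj : ContinuousLinearMap.adjoint (g (Mν - P)) = g ((Mν - P)ᴴ) := by
      rw [← ContinuousLinearMap.star_eq_adjoint, ← map_star g,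
        Matrix.star_eq_conjTranspose]
    have hns : ‖g ((Mν - P)ᴴ)‖ = ‖g (Mν - P)‖ := by
      rw [← hadj]
      exact (ContinuousLinearMap.adjoint (𝕜 := ℂ)).norm_map (g (Mν - P))
    rw [hadef, h1, hns]
  have hopb : ‖g (Mνᴴ - P)‖ ≤ Real.sqrt K := by
    refine ContinuousLinearMap.opNorm_le_bound _ (Real.sqrt_nonneg _) fun v => ?_
    set w : EuclideanSpace ℂ (Fin n) := g (1 - P) v with hwdef
    have hwv : ‖w‖ ≤ ‖v‖ := hgP_proj (1 - P) h1Pherm h1Pidem v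
    have hPw : g P w = 0 := by
      rw [hwdef, ← ContinuousLinearMap.mul_apply, hg_mul, hP1P, map_zero]
      rfl
    have happly : g (Mνᴴ - P) v = g Mνᴴ w := by
      rw [hwdef, ← ContinuousLinearMap.mul_apply, hg_mul, hkey_mat]
    -- per-η inner ℂ product bounds
    have hper : ∀ η, ‖g ((M η)ᴴ) w‖ ^ 2 ≤
        (1 - Δloc) ^ 2 * ‖w‖ ^ 2 + c * ‖g (Prj η) w‖ ^ 2 := by
      intro η
      have hpsd := psd_re_inner_nonneg _ (hgram η) w
      have hgD : g ((((1 - Δloc) ^ 2 : ℝ) : ℂ) • (1 : Matrix (Fin n) (Fin n) ℂ)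
          + ((1 - (1 - Δloc) ^ 2 : ℝ) : ℂ) • Prj η - M η * (M η)ᴴ) w
          = (((1 - Δloc) ^ 2 : ℝ) : ℂ) • w + ((c : ℝ) : ℂ) • (g (Prj η) w)
            - g (M η * (M η)ᴴ) w := by
        rw [map_sub, map_add, _root_.map_smul, _root_.map_smul, _root_.map_one]
        rfl
      rw [hgD, inner_sub_right, inner_add_right, inner_smul_right, inner_smul_right] at hpsd
      have hww : (inner ℂ w w : ℂ).re = ‖w‖ ^ 2 := by
        rw [← RCLike.re_to_complex, inner_self_eq_norm_sq (𝕜 := ℂ)]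
      have hPrjw : (inner ℂ w (g (Prj η) w) : ℂ).re = ‖g (Prj η) w‖ ^ 2 :=
        proj_re_inner_eq (g (Prj η)) (hg_sa _ (hPrj_herm η))
          (by rw [hg_mul, hPrj_idem]) w
      have hMM : (inner ℂ w (g (M η * (M η)ᴴ) w) : ℂ).re = ‖g ((M η)ᴴ) w‖ ^ 2 := by
        have hadj : ContinuousLinearMap.adjoint (g (M η)) = g ((M η)ᴴ) := by
          rw [← ContinuousLinearMap.star_eq_adjoint, ← map_star g,
            Matrix.star_eq_conjTranspose]
        have h1 : (inner ℂ w (g (M η * (M η)ᴴ) w) : ℂ)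
            = inner ℂ (g ((M η)ᴴ) w) (g ((M η)ᴴ) w) := by
          rw [← hg_mul, ContinuousLinearMap.mul_apply,
            ← ContinuousLinearMap.adjoint_inner_left (g (M η)) (g ((M η)ᴴ) w) w, hadj]
        rw [h1, ← RCLike.re_to_complex, inner_self_eq_norm_sq (𝕜 := ℂ)]
      simp only [Complex.add_re, Complex.sub_re, Complex.re_ofReal_mul] at hpsd
      rw [hww, hPrjw, hMM] at hpsd
      linarith
    -- norm of the sum
    have hquad : ‖g Mνᴴ w‖ ≤ ∑ η, q η * ‖g ((M η)ᴴ) w‖ := by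
      have h1 : g Mνᴴ w = ∑ η, (q η : ℂ) • (g ((M η)ᴴ) w) := by
        rw [hMνH, map_sum, ContinuousLinearMap.sum_apply]
        refine Finset.sum_congr rfl fun η _ => ?_
        rw [_root_.map_smul]
        rfl
      rw [h1]
      refine (norm_sum_le _ _).trans (le_of_eq ?_)
      refine Finset.sum_congr rfl fun η _ => ?_
      have hns : ‖(q η : ℂ) • (g ((M η)ᴴ) w)‖ = ‖((q η : ℝ) : ℂ)‖ * ‖g ((M η)ᴴ) w‖ := by
        exact norm_smul ((q η : ℝ) : ℂ) (g ((M η)ᴴ) w)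
      rw [hns, Complex.norm_real, Real.norm_eq_abs, abs_of_nonneg (hq η)]
    -- Cauchy–Schwarz over η
    have hCS : (∑ η, q η * ‖g ((M η)ᴴ) w‖) ^ 2 ≤ ∑ η, q η * ‖g ((M η)ᴴ) w‖ ^ 2 := by
      have := Finset.sum_mul_sq_le_sq_mul_sq Finset.univ
        (fun η => Real.sqrt (q η)) (fun η => Real.sqrt (q η) * ‖g ((M η)ᴴ) w‖)
      have h1 : ∀ η : H, Real.sqrt (q η) * (Real.sqrt (q η) * ‖g ((M η)ᴴ) w‖)
          = q η * ‖g ((M η)ᴴ) w‖ := fun η => by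
        rw [← mul_assoc, Real.mul_self_sqrt (hq η)]
      have h2 : ∀ η : H, Real.sqrt (q η) ^ 2 = q η := fun η => Real.sq_sqrt (hq η)
      have h3 : ∀ η : H, (Real.sqrt (q η) * ‖g ((M η)ᴴ) w‖) ^ 2
          = q η * ‖g ((M η)ᴴ) w‖ ^ 2 := fun η => by
        rw [mul_pow, h2]
      simp only [h1, h2, h3] at this
      calc (∑ η, q η * ‖g ((M η)ᴴ) w‖) ^ 2
          ≤ (∑ η, q η) * ∑ η, q η * ‖g ((M η)ᴴ) w‖ ^ 2 := this
        _ = ∑ η, q η * ‖g ((M η)ᴴ) w‖ ^ 2 := by rw [hqsum, one_mul]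
    -- sum of projector terms
    have hsumP : ∑ η, q η * ‖g (Prj η) w‖ ^ 2 ≤ b * ‖w‖ ^ 2 := by
      have h1 : ∑ η, q η * ‖g (Prj η) w‖ ^ 2 = (inner ℂ w (g MH w) : ℂ).re := by
        have h2 : g MH w = ∑ η, (q η : ℂ) • (g (Prj η) w) := by
          rw [hMHdef, map_sum, ContinuousLinearMap.sum_apply]
          refine Finset.sum_congr rfl fun η _ => ?_
          rw [_root_.map_smul]
          rfl
        rw [h2, inner_sum]
        rw [Complex.re_sum]
        refine Finset.sum_congr rfl fun η _ => ?_
        rw [inner_smul_right, Complex.re_ofReal_mul,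
          proj_re_inner_eq (g (Prj η)) (hg_sa _ (hPrj_herm η))
            (by rw [hg_mul, hPrj_idem]) w]
      have h3 : g MH w = g (MH - P) w + g P w := by
        rw [← ContinuousLinearMap.add_apply, ← map_add, sub_add_cancel]
      have h4 : (inner ℂ w (g MH w) : ℂ).re = (inner ℂ w (g (MH - P) w) : ℂ).re := by
        rw [h3, hPw, add_zero]
      have h5 : (inner ℂ w (g (MH - P) w) : ℂ).re ≤ ‖w‖ * ‖g (MH - P) w‖ := by
        rw [← RCLike.re_to_complex]
        exact re_inner_le_norm w _
      have h6 : ‖g (MH - P) w‖ ≤ b * ‖w‖ := by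
        rw [hbdef]
        exact ContinuousLinearMap.le_opNorm _ _
      have h7 : ‖w‖ * ‖g (MH - P) w‖ ≤ b * ‖w‖ ^ 2 := by
        calc ‖w‖ * ‖g (MH - P) w‖ ≤ ‖w‖ * (b * ‖w‖) := by
              exact mul_le_mul_of_nonneg_left h6 (norm_nonneg w)
          _ = b * ‖w‖ ^ 2 := by ring
      rw [h1, h4] at *
      linarith
    -- put it together
    have hsq : ‖g (Mνᴴ - P) v‖ ^ 2 ≤ K * ‖v‖ ^ 2 := by
      rw [happly]
      have h1 : ‖g Mνᴴ w‖ ^ 2 ≤ (∑ η, q η * ‖g ((M η)ᴴ) w‖) ^ 2 := by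
        apply pow_le_pow_left₀ (norm_nonneg _) hquad
      have h2 : ∑ η, q η * ‖g ((M η)ᴴ) w‖ ^ 2 ≤
          (1 - Δloc) ^ 2 * ‖w‖ ^ 2 + c * ∑ η, q η * ‖g (Prj η) w‖ ^ 2 := by
        calc ∑ η, q η * ‖g ((M η)ᴴ) w‖ ^ 2
            ≤ ∑ η, q η * ((1 - Δloc) ^ 2 * ‖w‖ ^ 2 + c * ‖g (Prj η) w‖ ^ 2) := by
              refine Finset.sum_le_sum fun η _ => ?_
              exact mul_le_mul_of_nonneg_left (hper η) (hq η)
          _ = (1 - Δloc) ^ 2 * ‖w‖ ^ 2 + c * ∑ η, q η * ‖g (Prj η) w‖ ^ 2 := by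
              simp only [mul_add]
              rw [Finset.sum_add_distrib]
              congr 1
              · rw [← Finset.sum_mul, hqsum, one_mul]
              · rw [Finset.mul_sum]
                exact Finset.sum_congr rfl fun η _ => by ring
      have h3 : c * ∑ η, q η * ‖g (Prj η) w‖ ^ 2 ≤ c * (b * ‖w‖ ^ 2) :=
        mul_le_mul_of_nonneg_left hsumP hc0
      have h4 : ‖w‖ ^ 2 ≤ ‖v‖ ^ 2 := pow_le_pow_left₀ (norm_nonneg _) hwv 2
      calc ‖g Mνᴴ w‖ ^ 2 ≤ (1 - Δloc) ^ 2 * ‖w‖ ^ 2 + c * (b * ‖w‖ ^ 2) := by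
            linarith [hCS]
        _ = K * ‖w‖ ^ 2 := by rw [hKdef]; ring
        _ ≤ K * ‖v‖ ^ 2 := mul_le_mul_of_nonneg_left h4 hK0
    calc ‖g (Mνᴴ - P) v‖ = Real.sqrt (‖g (Mνᴴ - P) v‖ ^ 2) :=
          (Real.sqrt_sq (norm_nonneg _)).symm
      _ ≤ Real.sqrt (K * ‖v‖ ^ 2) := Real.sqrt_le_sqrt hsq
      _ = Real.sqrt K * ‖v‖ := by
          rw [Real.sqrt_mul hK0, Real.sqrt_sq (norm_nonneg v)]
  have ha2 : a ^ 2 ≤ K := by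
    rw [hastar]
    calc ‖g (Mνᴴ - P)‖ ^ 2 ≤ Real.sqrt K ^ 2 :=
          pow_le_pow_left₀ (norm_nonneg _) hopb 2
      _ = K := Real.sq_sqrt hK0
  -- final arithmetic
  have hgoal : 1 - a ≥ Δloc / 2 * (1 - b) := by
    have hs0 : 0 ≤ 1 - b := by linarith
    have hR0 : 0 ≤ 1 - Δloc / 2 * (1 - b) := by nlinarith
    have hR2 : a ^ 2 ≤ (1 - Δloc / 2 * (1 - b)) ^ 2 := by
      rw [hKdef, hcdef] at ha2
      nlinarith [mul_nonneg (mul_nonneg hΔ0 hs0) (sub_nonneg.2 hΔ1),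
        sq_nonneg (Δloc * (1 - b))]
    have haR : a ≤ 1 - Δloc / 2 * (1 - b) := by
      calc a = Real.sqrt (a ^ 2) := (Real.sqrt_sq ha0).symm
        _ ≤ Real.sqrt ((1 - Δloc / 2 * (1 - b)) ^ 2) := Real.sqrt_le_sqrt hR2
        _ = 1 - Δloc / 2 * (1 - b) := Real.sqrt_sq hR0
    linarith
  -- identify opNorm with our local names
  have e1 : opNorm (Mν - P) = a := rfl
  have e2 : opNorm (MH - P) = b := rfl
  rw [e1, e2]
  exact hgoal
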